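/- arXiv:math/0502499 — 3 statements merged into one kernel-verified Lean document; each statement's English description precedes it below -/
import Mathlib

section
/- Let (W,S) be a Coxeter system, and write T̃_u T̃_{v^{-1}}^{-1} = Σ_{x∈W} R^u_{x,v} T̃_x in the generic Iwahori–Hecke algebra of (W,S). Then for all u, v, x ∈ W there exists a polynomial p ∈ ℤ[X] with R^u_{x,v} = p(Q) such that every exponent i with nonzero coefficient in p satisfies i ≡ ℓ(uv) − ℓ(x) (mod 2). -/
open LaurentPolynomial

noncomputable section

variable {B W : Type*} [Group W] {M : CoxeterMatrix B}

namespace Wak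
open Polynomial


noncomputable section

variable {B W : Type*} [Group W] {M : CoxeterMatrix B}
variable {H : Type*} [Ring H] [Algebra (LaurentPolynomial ℤ) H]

def Qq : LaurentPolynomial ℤ := T (-1) - T 1

def Tt (cs : CoxeterSystem M W) (Tb : Module.Basis W (LaurentPolynomial ℤ) H) (w : W) : H :=
  (T (-(cs.length w : ℤ)) : LaurentPolynomial ℤ) • Tb w

def Spar (ε : ZMod 2) : Submodule ℤ (LaurentPolynomial ℤ) where
  carrier := {a | ∃ p : ℤ[X], a = aeval Qq p ∧ ∀ i : ℕ, p.coeff i ≠ 0 → (i : ZMod 2) = ε}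
  zero_mem' := ⟨0, by simp, by simp⟩
  add_mem' := by
    rintro a b ⟨p, rfl, hp⟩ ⟨q, rfl, hq⟩
    refine ⟨p + q, by simp, fun i hi => ?_⟩
    by_cases h : p.coeff i = 0
    · exact hq i (by simpa [h] using hi)
    · exact hp i h
  smul_mem' := by
    rintro n a ⟨p, rfl, hp⟩
    exact ⟨n • p, by simp, fun i hi => hp i fun h => hi (by simp [Polynomial.coeff_smul, h])⟩

variable (cs : CoxeterSystem M W) (Tb : Module.Basis W (LaurentPolynomial ℤ) H)

def Ppar (ε : ZMod 2) : Submodule ℤ H :=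
  Submodule.span ℤ {h | ∃ (i : ℕ) (y : W),
    (i : ZMod 2) + (cs.length y : ZMod 2) = ε ∧ h = Qq ^ i • Tt cs Tb y}

variable {cs Tb}

lemma h2z : (2 : ZMod 2) = 0 := by decide

lemma Tb_one (o : H) (ho : Tb 1 * o = 1)
    (hmul : ∀ a b : W, cs.length (a * b) = cs.length a + cs.length b →
      Tb a * Tb b = Tb (a * b)) : Tb (1 : W) = 1 := by
  have h11 : Tb (1 : W) * Tb 1 = Tb 1 := by simpa using hmul 1 1 (by simp)
  calc Tb (1 : W) = Tb 1 * (Tb 1 * o) := by rw [ho, mul_one]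
  _ = (Tb 1 * Tb 1) * o := by rw [mul_assoc]
  _ = 1 := by rw [h11, ho]

lemma Tt_one (o : H) (ho : Tb 1 * o = 1)
    (hmul : ∀ a b : W, cs.length (a * b) = cs.length a + cs.length b →
      Tb a * Tb b = Tb (a * b)) : Tt cs Tb 1 = 1 := by
  rw [Tt, Tb_one o ho hmul]
  simp

lemma quad (hquad : ∀ i : B, (Tb (cs.simple i) - algebraMap (LaurentPolynomial ℤ) H (T 2)) *
      (Tb (cs.simple i) + 1) = 0) (i : B) :
    Tb (cs.simple i) * Tb (cs.simple i)
      = (T 2 - 1 : LaurentPolynomial ℤ) • Tb (cs.simple i) + (T 2 : LaurentPolynomial ℤ) • (1 : H) := by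
  have h := hquad i
  have h2 : Tb (cs.simple i) * Tb (cs.simple i) + Tb (cs.simple i)
      - algebraMap (LaurentPolynomial ℤ) H (T 2) * Tb (cs.simple i)
      - algebraMap (LaurentPolynomial ℤ) H (T 2) = 0 := by
    rw [← h]; noncomm_ring
  apply eq_of_sub_eq_zero
  rw [← h2, sub_smul, one_smul, Algebra.smul_def, Algebra.smul_def, mul_one]
  abel

lemma Tt_simple_mul_of_not_descent
    (hmul : ∀ a b : W, cs.length (a * b) = cs.length a + cs.length b →
      Tb a * Tb b = Tb (a * b))
    (i : B) (y : W) (h : ¬ cs.IsLeftDescent y i) :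
    Tt cs Tb (cs.simple i) * Tt cs Tb y = Tt cs Tb (cs.simple i * y) := by
  have hl : cs.length (cs.simple i * y) = cs.length (cs.simple i) + cs.length y := by
    rw [cs.length_simple, cs.not_isLeftDescent_iff.mp h, add_comm]
  rw [Tt, Tt, Tt, smul_mul_assoc, mul_smul_comm, hmul _ _ hl, smul_smul, ← T_add, hl]
  congr 2
  push_cast [cs.length_simple]
  ring

lemma Tt_simple_mul_of_descent
    (hmul : ∀ a b : W, cs.length (a * b) = cs.length a + cs.length b →
      Tb a * Tb b = Tb (a * b))
    (hquad : ∀ i : B, (Tb (cs.simple i) - algebraMap (LaurentPolynomial ℤ) H (T 2)) *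
      (Tb (cs.simple i) + 1) = 0)
    (i : B) (y : W) (h : cs.IsLeftDescent y i) :
    Tt cs Tb (cs.simple i) * Tt cs Tb y = Tt cs Tb (cs.simple i * y) - Qq • Tt cs Tb y := by
  set y' := cs.simple i * y with hy'
  have hcan : cs.simple i * y' = y := by rw [hy', CoxeterSystem.simple_mul_simple_cancel_left]
  have hl : cs.length y' + 1 = cs.length y := cs.isLeftDescent_iff.mp h
  have hTb : Tb (cs.simple i) * Tb y' = Tb y := by
    have := hmul (cs.simple i) y' (by rw [hcan, cs.length_simple, ← hl, add_comm])
    rwa [hcan] at this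
  have hyz : (cs.length y' : ℤ) = (cs.length y : ℤ) - 1 := by omega
  have step : Tt cs Tb (cs.simple i) * Tt cs Tb y
      = (T (-1) : LaurentPolynomial ℤ) • (T (-(cs.length y : ℤ)) : LaurentPolynomial ℤ) •
        ((T 2 - 1 : LaurentPolynomial ℤ) • Tb y + (T 2 : LaurentPolynomial ℤ) • Tb y') := by
    rw [Tt, Tt, cs.length_simple, smul_mul_assoc, mul_smul_comm, ← hTb, ← mul_assoc,
      quad hquad, add_mul, smul_mul_assoc, smul_mul_assoc, one_mul, hTb]
    norm_num
  rw [step, Tt, Tt, Qq, hyz]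
  have hT2 : (T 2 : LaurentPolynomial ℤ) = T 1 * T 1 := by rw [← T_add]; norm_num
  match_scalars
  · simp only [hT2, mul_sub, sub_mul, mul_one, one_mul, neg_sub, ← T_add]
    congr 1; ring
  · simp only [hT2, mul_sub, sub_mul, mul_one, one_mul, neg_sub, ← T_add]
    congr 1; ring

lemma gen_mem {ε : ZMod 2} (i : ℕ) (y : W)
    (h : (i : ZMod 2) + (cs.length y : ZMod 2) = ε) : Qq ^ i • Tt cs Tb y ∈ Ppar cs Tb ε :=
  Submodule.subset_span ⟨i, y, h, rfl⟩

lemma Qq_smul_mem {δ : ZMod 2} {h : H} (hm : h ∈ Ppar cs Tb δ) :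
    Qq • h ∈ Ppar cs Tb (δ + 1) := by
  induction hm using Submodule.span_induction with
  | mem a ha =>
    obtain ⟨i, y, hp, rfl⟩ := ha
    rw [smul_smul, ← pow_succ']
    refine gen_mem (i + 1) y ?_
    push_cast
    linear_combination hp
  | zero => simp
  | add a b _ _ iha ihb => rw [smul_add]; exact add_mem iha ihb
  | smul n a _ ih => rw [smul_comm]; exact Submodule.smul_mem _ _ ih

lemma Ts_mul_mem
    (hmul : ∀ a b : W, cs.length (a * b) = cs.length a + cs.length b →
      Tb a * Tb b = Tb (a * b))
    (hquad : ∀ i : B, (Tb (cs.simple i) - algebraMap (LaurentPolynomial ℤ) H (T 2)) *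
      (Tb (cs.simple i) + 1) = 0)
    (i : B) {δ : ZMod 2} {h : H} (hm : h ∈ Ppar cs Tb δ) :
    Tt cs Tb (cs.simple i) * h ∈ Ppar cs Tb (δ + 1) := by
  induction hm using Submodule.span_induction with
  | mem a ha =>
    obtain ⟨j, y, hp, rfl⟩ := ha
    rw [mul_smul_comm]
    by_cases hd : cs.IsLeftDescent y i
    · rw [Tt_simple_mul_of_descent hmul hquad i y hd, smul_sub]
      refine sub_mem (gen_mem j _ ?_) ?_
      · have h1 : (cs.length (cs.simple i * y) : ZMod 2) + 1 = (cs.length y : ZMod 2) := by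
          exact_mod_cast congrArg (Nat.cast : ℕ → ZMod 2) (cs.isLeftDescent_iff.mp hd)
        linear_combination hp + h1 - h2z
      · rw [smul_smul, ← pow_succ]
        refine gen_mem (j + 1) y ?_
        push_cast
        linear_combination hp
    · rw [Tt_simple_mul_of_not_descent hmul i y hd]
      refine gen_mem j _ ?_
      have h1 : (cs.length (cs.simple i * y) : ZMod 2) = (cs.length y : ZMod 2) + 1 := by
        exact_mod_cast congrArg (Nat.cast : ℕ → ZMod 2) (cs.not_isLeftDescent_iff.mp hd)
      linear_combination hp + h1
  | zero => simp
  | add a b _ _ iha ihb => rw [mul_add]; exact add_mem iha ihb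
  | smul n a _ ih => rw [mul_smul_comm]; exact Submodule.smul_mem _ _ ih

lemma Tt_mul_mem (o : H) (ho : Tb 1 * o = 1)
    (hmul : ∀ a b : W, cs.length (a * b) = cs.length a + cs.length b →
      Tb a * Tb b = Tb (a * b))
    (hquad : ∀ i : B, (Tb (cs.simple i) - algebraMap (LaurentPolynomial ℤ) H (T 2)) *
      (Tb (cs.simple i) + 1) = 0) :
    ∀ (n : ℕ) (w : W), cs.length w ≤ n → ∀ (δ : ZMod 2) (h : H), h ∈ Ppar cs Tb δ →
      Tt cs Tb w * h ∈ Ppar cs Tb ((cs.length w : ZMod 2) + δ) := by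
  intro n
  induction n with
  | zero =>
    intro w hw δ h hm
    have hw1 : w = 1 := cs.length_eq_zero_iff.mp (Nat.le_zero.mp hw)
    subst hw1
    rw [Tt_one o ho hmul, one_mul]
    simpa using hm
  | succ n ih =>
    intro w hw δ h hm
    by_cases h1 : w = 1
    · subst h1
      rw [Tt_one o ho hmul, one_mul]
      simpa using hm
    · obtain ⟨i, hd⟩ := cs.exists_leftDescent_of_ne_one h1
      set w' := cs.simple i * w with hw'd
      have hnd : ¬ cs.IsLeftDescent w' i := cs.isLeftDescent_iff_not_isLeftDescent_mul.mp hd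
      have hcan : cs.simple i * w' = w := by
        rw [hw'd, CoxeterSystem.simple_mul_simple_cancel_left]
      have hfac : Tt cs Tb (cs.simple i) * Tt cs Tb w' = Tt cs Tb w := by
        rw [Tt_simple_mul_of_not_descent hmul i w' hnd, hcan]
      have hlen : cs.length w' + 1 = cs.length w := cs.isLeftDescent_iff.mp hd
      have ih1 := ih w' (by omega) δ h hm
      have key := Ts_mul_mem hmul hquad i ih1
      rw [← mul_assoc, hfac] at key
      have hz : (cs.length w : ZMod 2) + δ = ((cs.length w' : ZMod 2) + δ) + 1 := by
        have h1' : (cs.length w' : ZMod 2) + 1 = (cs.length w : ZMod 2) := by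
          exact_mod_cast congrArg (Nat.cast : ℕ → ZMod 2) hlen
        linear_combination -h1'
      rw [hz]
      exact key

lemma exists_inv (o : H) (ho : Tb 1 * o = 1)
    (hmul : ∀ a b : W, cs.length (a * b) = cs.length a + cs.length b →
      Tb a * Tb b = Tb (a * b))
    (hquad : ∀ i : B, (Tb (cs.simple i) - algebraMap (LaurentPolynomial ℤ) H (T 2)) *
      (Tb (cs.simple i) + 1) = 0) :
    ∀ (n : ℕ) (w : W), cs.length w ≤ n → ∃ h : H,
      h * Tt cs Tb w = 1 ∧ Tt cs Tb w * h = 1 ∧ h ∈ Ppar cs Tb (cs.length w : ZMod 2) := by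
  intro n
  induction n with
  | zero =>
    intro w hw
    have hw1 : w = 1 := cs.length_eq_zero_iff.mp (Nat.le_zero.mp hw)
    subst hw1
    refine ⟨1, by rw [Tt_one o ho hmul, one_mul], by rw [Tt_one o ho hmul, one_mul], ?_⟩
    have : (1 : H) = Qq ^ 0 • Tt cs Tb 1 := by rw [pow_zero, one_smul, Tt_one o ho hmul]
    rw [this]
    exact gen_mem 0 1 (by simp)
  | succ n ih =>
    intro w hw
    by_cases h1 : w = 1
    · subst h1
      refine ⟨1, by rw [Tt_one o ho hmul, one_mul], by rw [Tt_one o ho hmul, one_mul], ?_⟩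
      have : (1 : H) = Qq ^ 0 • Tt cs Tb 1 := by rw [pow_zero, one_smul, Tt_one o ho hmul]
      rw [this]
      exact gen_mem 0 1 (by simp)
    · obtain ⟨i, hd⟩ := cs.exists_rightDescent_of_ne_one h1
      set w' := w * cs.simple i with hw'd
      have hcan : w' * cs.simple i = w := by
        rw [hw'd, CoxeterSystem.simple_mul_simple_cancel_right]
      have hlen : cs.length w' + 1 = cs.length w := cs.isRightDescent_iff.mp hd
      have hTf : Tt cs Tb w' * Tt cs Tb (cs.simple i) = Tt cs Tb w := by
        have hmm : cs.length (w' * cs.simple i) = cs.length w' + cs.length (cs.simple i) := by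
          rw [hcan, cs.length_simple, ← hlen]
        rw [Tt, Tt, Tt, cs.length_simple, smul_mul_assoc, mul_smul_comm, hmul _ _ hmm, hcan,
          smul_smul, ← T_add]
        congr 2
        omega
      -- Tt s * Tt s = 1 - Qq • Tt s
      have hsd : cs.IsLeftDescent (cs.simple i) i := by
        rw [CoxeterSystem.IsLeftDescent, cs.simple_mul_simple_self, cs.length_one, cs.length_simple]
        norm_num
      have hss : Tt cs Tb (cs.simple i) * Tt cs Tb (cs.simple i)
          = 1 - Qq • Tt cs Tb (cs.simple i) := by
        rw [Tt_simple_mul_of_descent hmul hquad i (cs.simple i) hsd, cs.simple_mul_simple_self,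
          Tt_one o ho hmul]
      set sInv : H := Tt cs Tb (cs.simple i) + Qq • 1 with hsInv
      have hs1 : Tt cs Tb (cs.simple i) * sInv = 1 := by
        rw [hsInv, mul_add, mul_smul_comm, mul_one, hss]
        abel
      have hs2 : sInv * Tt cs Tb (cs.simple i) = 1 := by
        rw [hsInv, add_mul, smul_mul_assoc, one_mul, hss]
        abel
      obtain ⟨h', hl', hr', hm'⟩ := ih w' (by omega)
      refine ⟨sInv * h', ?_, ?_, ?_⟩
      · calc sInv * h' * Tt cs Tb w = sInv * (h' * Tt cs Tb w' * Tt cs Tb (cs.simple i)) := by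
              rw [← hTf]; noncomm_ring
        _ = 1 := by rw [hl', one_mul, hs2]
      · calc Tt cs Tb w * (sInv * h') = Tt cs Tb w' * (Tt cs Tb (cs.simple i) * sInv) * h' := by
              rw [← hTf]; noncomm_ring
        _ = 1 := by rw [hs1, mul_one, hr']
      · have expand : sInv * h' = Tt cs Tb (cs.simple i) * h' + Qq • h' := by
          rw [hsInv, add_mul, smul_mul_assoc, one_mul]
        rw [expand]
        have m1 := Ts_mul_mem hmul hquad i hm'
        have m2 := Qq_smul_mem hm'
        have hz : (cs.length w : ZMod 2) = (cs.length w' : ZMod 2) + 1 := by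
          have h1' : (cs.length w' : ZMod 2) + 1 = (cs.length w : ZMod 2) := by
            exact_mod_cast congrArg (Nat.cast : ℕ → ZMod 2) hlen
          linear_combination -h1'
        rw [hz]
        exact add_mem m1 m2

lemma repr_mem {ε : ZMod 2} (x : W) {h : H} (hm : h ∈ Ppar cs Tb ε) :
    (T (cs.length x : ℤ) : LaurentPolynomial ℤ) * (Tb.repr h x)
      ∈ Spar (ε + (cs.length x : ZMod 2)) := by
  induction hm using Submodule.span_induction with
  | mem a ha =>
    obtain ⟨i, y, hp, rfl⟩ := ha
    classical
    rw [Tt, map_smul, map_smul, Finsupp.smul_apply, Finsupp.smul_apply, Tb.repr_self]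
    by_cases hxy : y = x
    · subst hxy
      rw [Finsupp.single_eq_same]
      simp only [smul_eq_mul, mul_one]
      have : (T (cs.length y : ℤ) : LaurentPolynomial ℤ) * (Qq ^ i * T (-(cs.length y : ℤ)))
          = Qq ^ i := by
        rw [mul_comm (Qq ^ i), ← mul_assoc, ← T_add]
        simp
      rw [this]
      refine ⟨X ^ i, by simp, fun j hj => ?_⟩
      have hji : j = i := by
        by_contra hne
        simp [Polynomial.coeff_X_pow, hne] at hj
      subst hji
      linear_combination hp - (cs.length y : ZMod 2) * h2z
    · rw [Finsupp.single_eq_of_ne (Ne.symm hxy)]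
      simp only [smul_eq_mul, mul_zero]
      exact zero_mem _
  | zero => simpa using zero_mem _
  | add a b _ _ iha ihb =>
    rw [map_add, Finsupp.add_apply, mul_add]
    exact add_mem iha ihb
  | smul n a _ ih =>
    rw [← Int.cast_smul_eq_zsmul (LaurentPolynomial ℤ), map_smul, Finsupp.smul_apply,
      smul_eq_mul, mul_left_comm, ← smul_eq_mul, Int.cast_smul_eq_zsmul]
    exact Submodule.smul_mem _ _ ih

end


end Wak

/-- In the generic Iwahori–Hecke algebra of a Coxeter system `(W,S)`
(an algebra over `ℤ[q^{1/2}, q^{-1/2}]`, here `LaurentPolynomial ℤ` with variable `T 1 = q^{1/2}`,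
so `q = T 2`), with standard basis `T_w` satisfying `T_u T_v = T_{uv}` when lengths add and the
quadratic relation `(T_s - q)(T_s + 1) = 0`, write
`T̃_u T̃_{v⁻¹}⁻¹ = Σ_x R^u_{x,v} T̃_x` where `T̃_w = q^{-ℓ(w)/2} T_w`.
Then `R^u_{x,v}` is a polynomial with integer coefficients in `Q = q^{-1/2} - q^{1/2}` in which
every exponent with nonzero coefficient is congruent to `ℓ(uv) - ℓ(x)` modulo 2. -/
theorem wakimoto_coeff_poly_in_Q_parity
    (cs : CoxeterSystem M W)
    {H : Type*} [Ring H] [Algebra (LaurentPolynomial ℤ) H]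
    (Tb : Module.Basis W (LaurentPolynomial ℤ) H)
    (hmul : ∀ a b : W, cs.length (a * b) = cs.length a + cs.length b →
      Tb a * Tb b = Tb (a * b))
    (hquad : ∀ i : B, (Tb (cs.simple i) - algebraMap (LaurentPolynomial ℤ) H (T 2)) *
      (Tb (cs.simple i) + 1) = 0)
    (Tinv : W → H)
    (hTinv : ∀ w : W, Tb w * Tinv w = 1 ∧ Tinv w * Tb w = 1)
    (u v x : W)
    -- `R^u_{x,v}`: the coefficient of `T̃_x = T (-ℓ(x)) • T_x` in the expansion of
    -- `T̃_u T̃_{v⁻¹}⁻¹ = (T (-ℓ(u)) • T_u) * (T (ℓ(v)) • (T_{v⁻¹})⁻¹)`.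
    (Rcoef : LaurentPolynomial ℤ)
    (hR : Rcoef = T (cs.length x : ℤ) *
      Tb.repr (((T (-(cs.length u : ℤ)) : LaurentPolynomial ℤ) • Tb u) * ((T (cs.length v : ℤ) : LaurentPolynomial ℤ) • Tinv v⁻¹)) x) :
    ∃ p : Polynomial ℤ,
      Rcoef = Polynomial.aeval (T (-1) - T 1 : LaurentPolynomial ℤ) p ∧
      ∀ i : ℕ, p.coeff i ≠ 0 → (i : ℤ) ≡ (cs.length (u * v) : ℤ) - cs.length x [ZMOD 2] := by
  classical
  have ho : Tb (1 : W) * Tinv 1 = 1 := (hTinv 1).1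
  set h' : H := (T (cs.length v : ℤ) : LaurentPolynomial ℤ) • Tinv v⁻¹ with hh'
  have hlinv : cs.length v⁻¹ = cs.length v := cs.length_inv v
  have h'r : Wak.Tt cs Tb v⁻¹ * h' = 1 := by
    rw [Wak.Tt, hh', smul_mul_assoc, mul_smul_comm, (hTinv v⁻¹).1, smul_smul, ← T_add, hlinv]
    simp
  obtain ⟨g, hg1, hg2, hgm⟩ := Wak.exists_inv (Tinv 1) ho hmul hquad (cs.length v⁻¹) v⁻¹ le_rfl
  have hgh : g = h' := by
    calc g = g * (Wak.Tt cs Tb v⁻¹ * h') := by rw [h'r, mul_one]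
    _ = (g * Wak.Tt cs Tb v⁻¹) * h' := by rw [mul_assoc]
    _ = h' := by rw [hg1, one_mul]
  rw [hlinv] at hgm
  rw [hgh] at hgm
  have hE := Wak.Tt_mul_mem (Tinv 1) ho hmul hquad (cs.length u) u le_rfl _ h' hgm
  have hRc := Wak.repr_mem x hE
  have hRE : Rcoef = (T (cs.length x : ℤ) : LaurentPolynomial ℤ) *
      (Tb.repr (Wak.Tt cs Tb u * h') x) := by
    rw [hR, Wak.Tt, hh']
  obtain ⟨p, hp1, hp2⟩ := hRc
  refine ⟨p, ?_, ?_⟩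
  · rw [hRE, hp1]; rfl
  · intro i hi
    have hcast := hp2 i hi
    apply (ZMod.intCast_eq_intCast_iff _ _ 2).mp
    push_cast
    have hpar : (cs.length (u * v) : ZMod 2) = ((cs.length u + cs.length v : ℕ) : ZMod 2) := by
      rw [← ZMod.natCast_mod, cs.length_mul_mod_two, ZMod.natCast_mod]
    push_cast at hpar
    rw [hpar]
    linear_combination hcast + (cs.length x : ZMod 2) * Wak.h2z
end
end

section
/- Let (W,S) be a Coxeter system, and write T̃_u T̃_{v^{-1}}^{-1} = Σ_{x∈W} R^u_{x,v} T̃_x in the generic Iwahori–Hecke algebra of (W,S). If R^u_{x,v} ≠ 0, then x ≤ uv in the Bruhat order on W. -/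
open LaurentPolynomial List

noncomputable section

attribute [local instance] Classical.propDecidable

variable {B W : Type*} [Group W] {M : CoxeterMatrix B}

/-- The Bruhat order on a Coxeter group: `x ≤ w` iff some reduced word for `w` contains a
subword (sublist) that is a reduced word for `x`. -/
def bruhatLE (cs : CoxeterSystem M W) (x w : W) : Prop :=
  ∃ ω : List B, cs.IsReduced ω ∧ cs.wordProd ω = w ∧
    ∃ ω' : List B, ω'.Sublist ω ∧ cs.IsReduced ω' ∧ cs.wordProd ω' = x

namespace HeckeAux

open CoxeterSystem

variable (cs : CoxeterSystem M W)

local prefix:100 "s" => cs.simple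
local prefix:100 "π" => cs.wordProd
local prefix:100 "ℓ" => cs.length
local prefix:100 "ris" => cs.rightInvSeq

/-- The underlying function of the Tits sign permutation attached to a simple reflection. -/
def sgnP (i : B) : (W × ℤˣ) → (W × ℤˣ) :=
  fun p => (s i * p.1 * s i, if p.1 = s i then -p.2 else p.2)

theorem conj_simple_eq_simple_iff (i : B) (t : W) :
    (s i * t * s i = s i) ↔ (t = s i) := by
  constructor
  · intro h
    calc t = s i * (s i * t * s i) * s i := by
              rw [show s i * (s i * t * s i) * s i
                  = s i * (s i * (t * s i * s i)) by group,
                cs.simple_mul_simple_cancel_right, cs.simple_mul_simple_cancel_left]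
    _ = s i * (s i) * s i := by rw [h]
    _ = s i := by rw [cs.simple_mul_simple_self, one_mul]
  · rintro rfl; rw [cs.simple_mul_simple_cancel_right]

theorem sgnP_invol (i : B) : Function.Involutive (sgnP cs i) := by
  rintro ⟨t, e⟩
  simp only [sgnP]
  have h1 : s i * (s i * t * s i) * s i = t := by
    rw [show s i * (s i * t * s i) * s i = s i * (s i * (t * s i * s i)) by group,
      cs.simple_mul_simple_cancel_right, cs.simple_mul_simple_cancel_left]
  have h2 := conj_simple_eq_simple_iff cs i t
  rw [Prod.mk.injEq]
  refine ⟨h1, ?_⟩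
  by_cases ht : t = s i
  · rw [if_pos ht, if_pos (h2.mpr ht), neg_neg]
  · rw [if_neg ht, if_neg (fun h => ht (h2.mp h))]

/-- The Tits sign permutation attached to a simple reflection. -/
def sgnPerm (i : B) : Equiv.Perm (W × ℤˣ) := (sgnP_invol cs i).toPerm

theorem sgnPerm_apply (i : B) (t : W) (e : ℤˣ) :
    sgnPerm cs i (t, e) = (s i * t * s i, if t = s i then -e else e) := rfl

-- Stage 2
/-- Product of the sign permutations along a word. -/
def sgnWord (ω : List B) : Equiv.Perm (W × ℤˣ) := (ω.map (sgnPerm cs)).prod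

@[simp] theorem sgnWord_nil : sgnWord cs ([] : List B) = 1 := rfl

theorem sgnWord_cons (i : B) (ω : List B) :
    sgnWord cs (i :: ω) = sgnPerm cs i * sgnWord cs ω := by
  simp [sgnWord]

theorem sgnWord_apply (ω : List B) (t : W) (e : ℤˣ) :
    sgnWord cs ω (t, e) =
      (π ω * t * (π ω)⁻¹, e * (-1) ^ (List.count t (ris ω))) := by
  induction ω generalizing t e with
  | nil => simp
  | cons i ω ih =>
    rw [sgnWord_cons, Equiv.Perm.mul_apply, ih, sgnPerm_apply]
    rw [CoxeterSystem.rightInvSeq]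
    have hc : List.count t ((π ω)⁻¹ * s i * π ω :: ris ω)
        = List.count t (ris ω) + if (π ω) * t * (π ω)⁻¹ = s i then 1 else 0 := by
      rw [List.count_cons]
      congr 1
      have : (t = (π ω)⁻¹ * s i * π ω) ↔ ((π ω) * t * (π ω)⁻¹ = s i) := by
        constructor
        · rintro rfl; group
        · intro h; rw [← h]; group
      by_cases hx : (π ω) * t * (π ω)⁻¹ = s i
      · rw [if_pos hx, if_pos (by simpa [beq_iff_eq] using (this.mpr hx).symm)]
      · rw [if_neg hx, if_neg (by simpa [beq_iff_eq] using fun hh => hx (this.mp hh.symm))]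
    rw [hc]
    rw [Prod.mk.injEq]
    constructor
    · rw [cs.wordProd_cons, mul_inv_rev, cs.inv_simple]; group
    · by_cases hx : (π ω) * t * (π ω)⁻¹ = s i
      · rw [if_pos hx, if_pos hx, pow_add, pow_one]
        simp [mul_neg]
      · rw [if_neg hx, if_neg hx, add_zero]


theorem simple_conj_pow (i j : B) (r : ℕ) :
    s j * (s i * s j) ^ r = (s j * s i) ^ r * s j := by
  induction r with
  | zero => simp
  | succ r ih =>
    rw [pow_succ, pow_succ, ← mul_assoc, ih]
    group

theorem g_form (i j : B) (n : ℕ) :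
    (π (CoxeterSystem.alternatingWord i j n))⁻¹ * s (if Even n then j else i)
      * π (CoxeterSystem.alternatingWord i j n)
      = (s j * s i) ^ n * s j := by
  rw [cs.prod_alternatingWord_eq_mul_pow]
  have hq : (s i * s j)⁻¹ = s j * s i := by
    rw [mul_inv_rev, cs.inv_simple, cs.inv_simple]
  rcases Nat.even_or_odd n with he | ho
  · obtain ⟨r, hr⟩ := he
    have hn2 : n / 2 = r := by omega
    rw [if_pos ⟨r, hr⟩, if_pos ⟨r, hr⟩, hn2, one_mul]
    rw [← inv_pow, hq]
    calc (s j * s i) ^ r * s j * (s i * s j) ^ r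
        = (s j * s i) ^ r * ((s j * s i) ^ r * s j) := by
          rw [mul_assoc, simple_conj_pow]
    _ = (s j * s i) ^ n * s j := by rw [← mul_assoc, ← pow_add, hr]
  · obtain ⟨r, hr⟩ := ho
    have hno : ¬ Even n := by simp [hr, parity_simps]
    have hn2 : n / 2 = r := by omega
    rw [if_neg hno, if_neg hno, hn2]
    rw [mul_inv_rev, ← inv_pow, hq, cs.inv_simple]
    calc (s j * s i) ^ r * s j * s i * (s j * ((s i * s j) ^ r))
        = (s j * s i) ^ r * (s j * s i) * (s j * (s i * s j) ^ r) := by group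
    _ = (s j * s i) ^ r * (s j * s i) * ((s j * s i) ^ r * s j) := by rw [simple_conj_pow]
    _ = (s j * s i) ^ (r + 1 + r) * s j := by rw [← mul_assoc, ← pow_succ, ← pow_add]
    _ = (s j * s i) ^ n * s j := by congr 2; omega

theorem alternatingWord_drop (i j : B) : ∀ (d n : ℕ),
    (CoxeterSystem.alternatingWord i j n).drop d = CoxeterSystem.alternatingWord i j (n - d) := by
  intro d
  induction d with
  | zero => intro n; simp
  | succ d ih =>
    intro n
    cases n with
    | zero => simp [CoxeterSystem.alternatingWord]
    | succ n =>
      rw [CoxeterSystem.alternatingWord_succ', List.drop_succ_cons, ih n]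
      congr 1
      omega

theorem alternatingWord_get? (i j : B) : ∀ (n k : ℕ), k < n →
    (CoxeterSystem.alternatingWord i j n)[k]?
      = some (if Even (n - 1 - k) then j else i) := by
  intro n
  induction n with
  | zero => omega
  | succ n ih =>
    intro k hk
    rw [CoxeterSystem.alternatingWord_succ']
    cases k with
    | zero =>
      rw [List.getElem?_cons_zero]
      norm_num
    | succ k =>
      rw [List.getElem?_cons_succ, ih k (by omega)]
      have : n + 1 - 1 - (k + 1) = n - 1 - k := by omega
      rw [this]

theorem ris_alternatingWord_getD (i j : B) (n k : ℕ) (h : k < n) :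
    (ris (CoxeterSystem.alternatingWord i j n)).getD k 1
      = (s j * s i) ^ (n - 1 - k) * s j := by
  rw [cs.getD_rightInvSeq, alternatingWord_drop, alternatingWord_get? i j n k h]
  show (π (CoxeterSystem.alternatingWord i j (n - (k+1))))⁻¹
      * s (if Even (n - 1 - k) then j else i)
      * π (CoxeterSystem.alternatingWord i j (n - (k+1))) = _
  have he : n - (k + 1) = n - 1 - k := by omega
  rw [he, g_form cs i j (n - 1 - k)]

theorem count_even_ris_alternating (i j : B) (t : W) :
    Even (List.count t (ris (CoxeterSystem.alternatingWord i j (2 * M i j)))) := by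
  set m := M i j with hm
  set L := ris (CoxeterSystem.alternatingWord i j (2 * m)) with hL
  have hlen : L.length = 2 * m := by
    rw [hL, CoxeterSystem.length_rightInvSeq, CoxeterSystem.length_alternatingWord]
  have hentry : ∀ k, k < 2 * m → L.getD k 1 = (s j * s i) ^ (2 * m - 1 - k) * s j := by
    intro k hk
    rw [hL, ris_alternatingWord_getD cs i j _ k hk]
  have hpow : (s j * s i) ^ m = 1 := cs.simple_mul_simple_pow' i j
  have key : L.take m = L.drop m := by
    apply List.ext_getElem
    · simp [hlen]; omega
    · intro k h1 h2
      have hk : k < m := by simp [hlen] at h1; omega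
      rw [List.getElem_take, List.getElem_drop]
      rw [← List.getD_eq_getElem L 1 (by omega : k < L.length),
        ← List.getD_eq_getElem L 1 (by omega : m + k < L.length)]
      rw [hentry k (by omega), hentry (m + k) (by omega)]
      have h3 : 2 * m - 1 - k = m + (2 * m - 1 - (m + k)) := by omega
      rw [h3, pow_add, hpow, one_mul]
  have : List.count t L = List.count t (L.take m) + List.count t (L.drop m) := by
    conv_lhs => rw [← List.take_append_drop m L]
    rw [List.count_append]
  rw [this, ← key]
  exact ⟨List.count t (L.take m), by omega⟩

theorem sgnWord_alternating (i j : B) (m : ℕ) :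
    (sgnPerm cs i * sgnPerm cs j) ^ m
      = sgnWord cs (CoxeterSystem.alternatingWord i j (2 * m)) := by
  induction m with
  | zero => simp [CoxeterSystem.alternatingWord]
  | succ m ih =>
    have h2 : 2 * (m + 1) = (2 * m + 1) + 1 := by omega
    rw [h2, CoxeterSystem.alternatingWord_succ', CoxeterSystem.alternatingWord_succ']
    rw [if_neg (by simp [parity_simps]), if_pos (by simp [parity_simps])]
    rw [sgnWord_cons, sgnWord_cons, ← ih, pow_succ', mul_assoc]

theorem sgnPerm_liftable : M.IsLiftable (sgnPerm cs) := by
  intro i j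
  rw [sgnWord_alternating]
  apply Equiv.ext
  rintro ⟨t, e⟩
  rw [sgnWord_apply]
  have hπ : π (CoxeterSystem.alternatingWord i j (2 * M i j)) = 1 := by
    rw [cs.prod_alternatingWord_eq_mul_pow, if_pos ⟨M i j, by omega⟩,
      (by omega : 2 * M i j / 2 = M i j), cs.simple_mul_simple_pow, one_mul]
  rw [hπ, Even.neg_one_pow (count_even_ris_alternating cs i j t)]
  simp


/-- The Tits sign representation. -/
def mu : W →* Equiv.Perm (W × ℤˣ) := CoxeterSystem.lift cs ⟨sgnPerm cs, sgnPerm_liftable cs⟩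

theorem mu_simple (i : B) : mu cs (s i) = sgnPerm cs i :=
  CoxeterSystem.lift_apply_simple cs (sgnPerm_liftable cs) i

theorem mu_wordProd (ω : List B) : mu cs (π ω) = sgnWord cs ω := by
  induction ω with
  | nil => simp [sgnWord]
  | cons i ω ih =>
    rw [cs.wordProd_cons, map_mul, mu_simple, ih, sgnWord_cons]

/-- The sign cocycle. -/
def eta (w t : W) : ℤˣ := (mu cs w (t, 1)).2

theorem eta_eq_count (ω : List B) (t : W) :
    eta cs (π ω) t = (-1) ^ (List.count t (ris ω)) := by
  rw [eta, mu_wordProd, sgnWord_apply, one_mul]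

theorem mu_apply (w t : W) (e : ℤˣ) :
    mu cs w (t, e) = (w * t * w⁻¹, e * eta cs w t) := by
  obtain ⟨ω, rfl⟩ := cs.wordProd_surjective w
  rw [mu_wordProd, sgnWord_apply, eta_eq_count]

theorem eta_mul (x y t : W) :
    eta cs (x * y) t = eta cs x (y * t * y⁻¹) * eta cs y t := by
  have h2 : mu cs (x * y) (t, 1) = mu cs x (mu cs y (t, 1)) := by
    rw [map_mul]; rfl
  rw [eta, h2, mu_apply cs y t 1, one_mul, mu_apply]
  exact mul_comm _ _

theorem eta_one (t : W) : eta cs 1 t = 1 := by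
  rw [eta, map_one]; rfl

theorem eta_units_cases (w t : W) : eta cs w t = 1 ∨ eta cs w t = -1 :=
  Int.units_eq_one_or _

theorem eta_inv (w t : W) : eta cs w⁻¹ t = eta cs w (w⁻¹ * t * w) := by
  have h := eta_mul cs w w⁻¹ t
  rw [mul_inv_cancel, eta_one, inv_inv] at h
  have h' : eta cs w (w⁻¹ * t * w) * eta cs w⁻¹ t = 1 := h.symm
  calc eta cs w⁻¹ t
      = (eta cs w (w⁻¹ * t * w) * eta cs w (w⁻¹ * t * w)) * eta cs w⁻¹ t := by
        rw [Int.units_mul_self, one_mul]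
  _ = eta cs w (w⁻¹ * t * w) * (eta cs w (w⁻¹ * t * w) * eta cs w⁻¹ t) := by
        rw [mul_assoc]
  _ = eta cs w (w⁻¹ * t * w) := by rw [h', mul_one]

theorem eta_simple (i : B) (t : W) :
    eta cs (s i) t = if t = s i then -1 else 1 := by
  rw [eta, mu_simple, sgnPerm_apply]

theorem mem_ris_of_eta {w t : W} (h : eta cs w t = -1) {ω : List B}
    (hw : π ω = w) : t ∈ ris ω := by
  have hc := eta_eq_count cs ω t
  rw [hw, h] at hc
  by_contra hmem
  rw [List.count_eq_zero_of_not_mem hmem, pow_zero] at hc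
  exact absurd hc.symm (by decide)

theorem isRightInversion_of_eta {w t : W} (h : eta cs w t = -1) :
    cs.IsRightInversion w t := by
  obtain ⟨ω, hred, hw⟩ := cs.exists_reduced_word' w
  have hm : t ∈ ris ω := mem_ris_of_eta cs h hw.symm
  have h2 := cs.isRightInversion_of_mem_rightInvSeq hred hm
  rwa [← hw] at h2

theorem eta_refl_self {t : W} (ht : cs.IsReflection t) : eta cs t t = -1 := by
  obtain ⟨w, i, rfl⟩ := ht
  have h1 : eta cs (w * s i * w⁻¹) (w * s i * w⁻¹)
      = eta cs (w * s i) (s i) * eta cs w⁻¹ (w * s i * w⁻¹) := by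
    have := eta_mul cs (w * s i) w⁻¹ (w * s i * w⁻¹)
    rw [show w⁻¹ * (w * s i * w⁻¹) * (w⁻¹)⁻¹ = s i by group] at this
    rw [← this]
  have h2 : eta cs (w * s i) (s i) = eta cs w (s i) * -1 := by
    have := eta_mul cs w (s i) (s i)
    rw [show s i * s i * (s i)⁻¹ = s i by group, eta_simple, if_pos rfl] at this
    exact this
  have h3 : eta cs w⁻¹ (w * s i * w⁻¹) = eta cs w (s i) := by
    rw [eta_inv, show w⁻¹ * (w * s i * w⁻¹) * w = s i by group]
  rw [h1, h2, h3, mul_comm (eta cs w (s i)) (-1), mul_assoc, Int.units_mul_self, mul_one]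

theorem eta_of_isRightInversion {w t : W} (h : cs.IsRightInversion w t) :
    eta cs w t = -1 := by
  obtain ⟨ht, hlen⟩ := h
  have h3 : (w * t) * t = w := by rw [mul_assoc, ht.mul_self, mul_one]
  have h1 := eta_mul cs (w * t) t t
  rw [show t * t * t⁻¹ = t by group, h3] at h1
  have h4 : eta cs (w * t) t = 1 := by
    rcases eta_units_cases cs (w * t) t with h' | h'
    · exact h'
    · exfalso
      have := (isRightInversion_of_eta cs h').2
      rw [h3] at this
      omega
  rw [h1, h4, one_mul, eta_refl_self cs ht]

theorem strong_exchange {w t : W} (h : cs.IsRightInversion w t) {ω : List B}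
    (hred : cs.IsReduced ω) (hw : π ω = w) :
    ∃ j < ω.length, w * t = π (ω.eraseIdx j) := by
  have hm : t ∈ ris ω := mem_ris_of_eta cs (eta_of_isRightInversion cs h) hw
  obtain ⟨j, hj, hget⟩ := List.getElem_of_mem hm
  have hjl : j < ω.length := by rw [← cs.length_rightInvSeq ω]; exact hj
  refine ⟨j, hjl, ?_⟩
  have h5 := cs.wordProd_mul_getD_rightInvSeq ω j
  rw [List.getD_eq_getElem _ 1 hj, hget, hw] at h5
  exact h5


theorem exists_reduced_sublist : ∀ (n : ℕ) (ω : List B), ω.length ≤ n →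
    ∃ σ, σ.Sublist ω ∧ cs.IsReduced σ ∧ π σ = π ω := by
  intro n
  induction n with
  | zero =>
    intro ω h
    have : ω = [] := List.length_eq_zero_iff.mp (Nat.le_zero.mp h)
    subst this
    exact ⟨[], List.Sublist.refl _, by simp [CoxeterSystem.IsReduced], rfl⟩
  | succ n ih =>
    intro ω h
    cases ω with
    | nil => exact ⟨[], List.Sublist.refl _, by simp [CoxeterSystem.IsReduced], rfl⟩
    | cons a ω₁ =>
      have hlen₁ : ω₁.length ≤ n := by simpa using h
      obtain ⟨σ₁, hsub₁, hred₁, hπ₁⟩ := ih ω₁ hlen₁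
      rcases cs.length_simple_mul (π ω₁) a with hup | hdown
      · refine ⟨a :: σ₁, hsub₁.cons₂ a, ?_, ?_⟩
        · show ℓ (π (a :: σ₁)) = (a :: σ₁).length
          rw [cs.wordProd_cons, hπ₁, hup]
          have : ℓ (π ω₁) = σ₁.length := by rw [← hπ₁]; exact hred₁
          rw [this, List.length_cons]
        · rw [cs.wordProd_cons, cs.wordProd_cons, hπ₁]
      · -- descent case
        have hinv : cs.IsRightInversion (π σ₁)⁻¹ (s a) := by
          constructor
          · exact cs.isReflection_simple a
          · have e1 : ℓ ((π σ₁)⁻¹ * s a) = ℓ (s a * π σ₁) := by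
              rw [show (π σ₁)⁻¹ * s a = (s a * π σ₁)⁻¹ by
                rw [mul_inv_rev, cs.inv_simple], cs.length_inv]
            rw [e1, cs.length_inv, hπ₁]
            omega
        have hredrev : cs.IsReduced σ₁.reverse := (cs.isReduced_reverse_iff σ₁).mpr hred₁
        obtain ⟨j, hj, heq⟩ := strong_exchange cs hinv hredrev (cs.wordProd_reverse σ₁)
        set ρ := (σ₁.reverse.eraseIdx j).reverse with hρ
        have hπρ : π ρ = π (a :: ω₁) := by
          rw [hρ, cs.wordProd_reverse, ← heq, cs.wordProd_cons, ← hπ₁]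
          rw [mul_inv_rev, cs.inv_simple, inv_inv]
        have hsubρ : ρ.Sublist ω₁ := by
          have h1 : (σ₁.reverse.eraseIdx j).Sublist σ₁.reverse :=
            List.eraseIdx_sublist _ _
          have h2 : ρ.Sublist σ₁.reverse.reverse := h1.reverse
          rw [List.reverse_reverse] at h2
          exact h2.trans hsub₁
        have hlenρ : ρ.length ≤ n := le_trans hsubρ.length_le hlen₁
        obtain ⟨σ, hs, hr, hp⟩ := ih ρ hlenρ
        exact ⟨σ, (hs.trans hsubρ).cons a, hr, by rw [hp, hπρ]⟩

theorem exists_reduced_sublist' (ω : List B) :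
    ∃ σ, σ.Sublist ω ∧ cs.IsReduced σ ∧ π σ = π ω :=
  exists_reduced_sublist cs ω.length ω le_rfl

/-- The (reverse-direction) Bruhat order defined by chains of reflections decreasing length. -/
def below (x w : W) : Prop :=
  Relation.ReflTransGen
    (fun a b => (∃ t, cs.IsReflection t ∧ a = b * t) ∧ ℓ a < ℓ b) x w

theorem below_refl (w : W) : below cs w w := Relation.ReflTransGen.refl

theorem below_trans {x y w : W} (h1 : below cs x y) (h2 : below cs y w) :
    below cs x w := Relation.ReflTransGen.trans h1 h2

theorem below_subword {x w : W} (h : below cs x w) :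
    ∀ τ : List B, cs.IsReduced τ → π τ = w →
      ∃ σ, σ.Sublist τ ∧ cs.IsReduced σ ∧ π σ = x := by
  induction h using Relation.ReflTransGen.head_induction_on with
  | refl => exact fun τ hred hπ => ⟨τ, List.Sublist.refl _, hred, hπ⟩
  | head hstep htail ih =>
    rename_i a c
    intro τ hred hπ
    obtain ⟨τc, hsubc, hredc, hπc⟩ := ih τ hred hπ
    obtain ⟨⟨t, htrefl, hat⟩, hlt⟩ := hstep
    have hinv : cs.IsRightInversion c t := ⟨htrefl, by rw [← hat]; exact hlt⟩
    obtain ⟨j, hj, heq⟩ := strong_exchange cs hinv hredc hπc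
    obtain ⟨σ, hs, hr, hp⟩ := exists_reduced_sublist' cs (τc.eraseIdx j)
    refine ⟨σ, (hs.trans (List.eraseIdx_sublist _ _)).trans hsubc, hr, ?_⟩
    rw [hp, ← heq, ← hat]

theorem bruhatLE_of_below {x w : W} (h : below cs x w) : bruhatLE cs x w := by
  obtain ⟨τ, hred, hπ⟩ := cs.exists_reduced_word' w
  obtain ⟨σ, hs, hr, hp⟩ := below_subword cs h τ hred hπ.symm
  exact ⟨τ, hred, hπ.symm, σ, hs, hr, hp⟩

/-- The key geometric step: if `u s` and `s v` are both longer, then `u v` is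
shorter than `u s v`, and they differ by a reflection. -/
theorem below_step {u v : W} {i : B}
    (hu : ℓ (u * s i) = ℓ u + 1) (hv : ℓ (s i * v) = ℓ v + 1) :
    below cs (u * v) (u * (s i * v)) := by
  set t : W := v⁻¹ * s i * v with hts
  have htrefl : cs.IsReflection t := ⟨v⁻¹, i, by rw [hts, inv_inv]⟩
  have hmul : (u * (s i * v)) * t = u * v := by
    rw [hts, show u * (s i * v) * (v⁻¹ * s i * v) = u * (s i * s i) * v by group,
      cs.simple_mul_simple_self, mul_one]
  have heta : eta cs (u * v) t = 1 := by
    have hcalc : eta cs (u * v) t = eta cs u (s i) * eta cs v t := by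
      rw [eta_mul]
      congr 2
      rw [hts]; group
    have h1 : eta cs u (s i) = 1 := by
      rcases eta_units_cases cs u (s i) with h' | h'
      · exact h'
      · exfalso
        have := (isRightInversion_of_eta cs h').2
        omega
    have h2 : eta cs v t = 1 := by
      have hv2 : eta cs v t = eta cs v⁻¹ (s i) := by
        rw [eta_inv, hts]
      rcases eta_units_cases cs v t with h' | h'
      · exact h'
      · exfalso
        rw [hv2] at h'
        have h3 := (isRightInversion_of_eta cs h').2
        have e1 : ℓ (v⁻¹ * s i) = ℓ (s i * v) := by
          rw [show v⁻¹ * s i = (s i * v)⁻¹ by rw [mul_inv_rev, cs.inv_simple],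
            cs.length_inv]
        rw [e1, cs.length_inv] at h3
        omega
    rw [hcalc, h1, h2, mul_one]
  have hlt : ℓ (u * v) < ℓ (u * (s i * v)) := by
    have hne : ℓ ((u * (s i * v)) * t) ≠ ℓ (u * (s i * v)) :=
      htrefl.length_mul_left_ne _
    rw [hmul] at hne
    rcases Nat.lt_or_gt_of_ne hne with h' | h'
    · exact h'
    · exfalso
      have hinv : cs.IsRightInversion (u * v) t := by
        refine ⟨htrefl, ?_⟩
        have : (u * v) * t = u * (s i * v) := by rw [hts]; group
        rw [this]
        omega
      have := eta_of_isRightInversion cs hinv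
      rw [heta] at this
      exact absurd this (by decide)
  exact Relation.ReflTransGen.single ⟨⟨t, htrefl, hmul.symm⟩, hlt⟩


section Hecke

variable {H : Type*} [Ring H] [Algebra (LaurentPolynomial ℤ) H]
  (Tb : Module.Basis W (LaurentPolynomial ℤ) H)
  (hmul : ∀ a b : W, cs.length (a * b) = cs.length a + cs.length b →
    Tb a * Tb b = Tb (a * b))
  (hquad : ∀ i : B, (Tb (cs.simple i) - algebraMap (LaurentPolynomial ℤ) H (T 2)) *
    (Tb (cs.simple i) + 1) = 0)
  (Tinv : W → H)
  (hTinv : ∀ w : W, Tb w * Tinv w = 1 ∧ Tinv w * Tb w = 1)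

include hmul hTinv

theorem Tb_one : Tb (1 : W) = 1 := by
  have h1 : Tb (1 : W) * Tb (1 : W) = Tb (1 : W) := by
    rw [hmul 1 1 (by simp [cs.length_one])]; rw [mul_one]
  have h3 : Tb (1 : W) * (Tb 1 * Tinv 1) = Tb 1 * Tinv 1 := by
    rw [← mul_assoc, h1]
  rwa [(hTinv 1).1, mul_one] at h3

theorem Tinv_one : Tinv (1 : W) = 1 := by
  have := (hTinv 1).1
  rwa [Tb_one cs Tb hmul Tinv hTinv, one_mul] at this

include hquad

theorem Tb_simple_sq (i : B) :
    Tb (s i) * Tb (s i) = (T 2 : LaurentPolynomial ℤ) • Tb (s i) - Tb (s i)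
      + (T 2 : LaurentPolynomial ℤ) • (1 : H) := by
  have h := hquad i
  rw [sub_mul, mul_add, mul_add, mul_one, mul_one, sub_eq_zero] at h
  rw [Algebra.smul_def, Algebra.smul_def, mul_one]
  calc Tb (s i) * Tb (s i)
      = Tb (s i) * Tb (s i) + Tb (s i) - Tb (s i) := by abel
  _ = algebraMap (LaurentPolynomial ℤ) H (T 2) * Tb (s i)
        + algebraMap (LaurentPolynomial ℤ) H (T 2) - Tb (s i) := by rw [h]
  _ = _ := by abel

theorem Tinv_simple (i : B) :
    Tinv (s i) = (T (-2) : LaurentPolynomial ℤ) • Tb (s i)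
      + ((T (-2) : LaurentPolynomial ℤ) - 1) • (1 : H) := by
  have hq : (T (-2) : LaurentPolynomial ℤ) * T 2 = 1 := by
    rw [← T_add]; norm_num
  set E : H := (T (-2) : LaurentPolynomial ℤ) • Tb (s i)
      + ((T (-2) : LaurentPolynomial ℤ) - 1) • (1 : H) with hE
  have hTE : Tb (s i) * E = 1 := by
    rw [hE, mul_add, mul_smul_comm, mul_smul_comm, mul_one,
      Tb_simple_sq cs Tb hmul hquad Tinv hTinv i]
    rw [smul_add, smul_sub, smul_smul, smul_smul, hq]
    rw [sub_smul]
    simp only [one_smul]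
    abel
  calc Tinv (s i) = Tinv (s i) * (Tb (s i) * E) := by rw [hTE, mul_one]
  _ = (Tinv (s i) * Tb (s i)) * E := by rw [mul_assoc]
  _ = E := by rw [(hTinv (s i)).2, one_mul]

theorem Tb_mul_simple_descent {w : W} (i : B) (h : ℓ (w * s i) + 1 = ℓ w) :
    Tb w * Tb (s i) = (T 2 : LaurentPolynomial ℤ) • Tb w - Tb w
      + (T 2 : LaurentPolynomial ℤ) • Tb (w * s i) := by
  have h1 : Tb (w * s i) * Tb (s i) = Tb w := by
    rw [hmul (w * s i) (s i) (by
      rw [cs.simple_mul_simple_cancel_right, cs.length_simple]; omega)]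
    rw [cs.simple_mul_simple_cancel_right]
  calc Tb w * Tb (s i) = Tb (w * s i) * (Tb (s i) * Tb (s i)) := by
        rw [← mul_assoc, h1]
  _ = Tb (w * s i) * ((T 2 : LaurentPolynomial ℤ) • Tb (s i) - Tb (s i)
        + (T 2 : LaurentPolynomial ℤ) • (1 : H)) := by
        rw [Tb_simple_sq cs Tb hmul hquad Tinv hTinv i]
  _ = (T 2 : LaurentPolynomial ℤ) • (Tb (w * s i) * Tb (s i)) - Tb (w * s i) * Tb (s i)
        + (T 2 : LaurentPolynomial ℤ) • Tb (w * s i) := by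
        rw [mul_add, mul_sub, mul_smul_comm, mul_smul_comm, mul_one]
  _ = _ := by rw [h1]

theorem Tb_mul_Tinv_simple_descent {u : W} (i : B) (h : ℓ (u * s i) + 1 = ℓ u) :
    Tb u * Tinv (s i) = Tb (u * s i) := by
  have hq : (T (-2) : LaurentPolynomial ℤ) * T 2 = 1 := by
    rw [← T_add]; norm_num
  rw [Tinv_simple cs Tb hmul hquad Tinv hTinv i]
  rw [mul_add, mul_smul_comm, mul_smul_comm, mul_one,
    Tb_mul_simple_descent cs Tb hmul hquad Tinv hTinv i h]
  rw [smul_add, smul_sub, smul_smul, smul_smul, hq, sub_smul]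
  simp only [one_smul]
  abel

theorem Tb_mul_Tinv_simple_ascent {u : W} (i : B) (h : ℓ (u * s i) = ℓ u + 1) :
    Tb u * Tinv (s i) = (T (-2) : LaurentPolynomial ℤ) • Tb (u * s i)
      + ((T (-2) : LaurentPolynomial ℤ) - 1) • Tb u := by
  have h1 : Tb u * Tb (s i) = Tb (u * s i) :=
    hmul u (s i) (by rw [cs.length_simple]; omega)
  rw [Tinv_simple cs Tb hmul hquad Tinv hTinv i]
  rw [mul_add, mul_smul_comm, mul_smul_comm, mul_one, h1]

theorem Tinv_decomp {v : W} (i : B) (h : ℓ (s i * v) = ℓ v + 1) :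
    Tinv ((s i * v)⁻¹) = Tinv (s i) * Tinv (v⁻¹) := by
  have hiv : (s i * v)⁻¹ = v⁻¹ * s i := by rw [mul_inv_rev, cs.inv_simple]
  have h1 : Tb (v⁻¹) * Tb (s i) = Tb ((s i * v)⁻¹) := by
    rw [hmul (v⁻¹) (s i) (by
      rw [show v⁻¹ * s i = (s i * v)⁻¹ from hiv.symm, cs.length_inv, cs.length_inv,
        cs.length_simple, h])]
    rw [hiv]
  have h2 : Tb ((s i * v)⁻¹) * (Tinv (s i) * Tinv (v⁻¹)) = 1 := by
    rw [← h1]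
    calc Tb v⁻¹ * Tb (s i) * (Tinv (s i) * Tinv v⁻¹)
        = Tb v⁻¹ * (Tb (s i) * Tinv (s i)) * Tinv v⁻¹ := by
          rw [mul_assoc, mul_assoc, mul_assoc]
    _ = 1 := by rw [(hTinv (s i)).1, mul_one, (hTinv v⁻¹).1]
  calc Tinv ((s i * v)⁻¹)
      = Tinv ((s i * v)⁻¹) * (Tb ((s i * v)⁻¹) * (Tinv (s i) * Tinv (v⁻¹))) := by
        rw [h2, mul_one]
  _ = (Tinv ((s i * v)⁻¹) * Tb ((s i * v)⁻¹)) * (Tinv (s i) * Tinv (v⁻¹)) := by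
        rw [mul_assoc]
  _ = Tinv (s i) * Tinv (v⁻¹) := by rw [(hTinv _).2, one_mul]

theorem hecke_main : ∀ (n : ℕ) (u v x : W), ℓ v = n →
    Tb.repr (Tb u * Tinv v⁻¹) x ≠ 0 → below cs x (u * v) := by
  intro n
  induction n with
  | zero =>
    intro u v x hn hne
    have hv1 : v = 1 := cs.length_eq_zero_iff.mp hn
    subst hv1
    rw [inv_one, Tinv_one cs Tb hmul Tinv hTinv, mul_one, Module.Basis.repr_self] at hne
    have hx : x = u := by
      by_contra hx
      rw [Finsupp.single_apply, if_neg (fun h => hx h.symm)] at hne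
      exact hne rfl
    subst hx
    rw [mul_one]
    exact below_refl cs x
  | succ n ih =>
    intro u v x hn hne
    have hvne : v ≠ 1 := by
      intro hv; rw [hv, cs.length_one] at hn; omega
    obtain ⟨i, hdesc⟩ := cs.exists_leftDescent_of_ne_one hvne
    have hdesc' : ℓ (s i * v) < ℓ v := hdesc
    set v'' := s i * v with hv''def
    have hsv : s i * v'' = v := by
      rw [hv''def, cs.simple_mul_simple_cancel_left]
    have hlenv'' : ℓ v'' = n := by
      rcases cs.length_simple_mul v i with h | h <;>
        rw [← hv''def] at h <;> omega
    have hasc : ℓ (s i * v'') = ℓ v'' + 1 := by rw [hsv]; omega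
    have hdec : Tinv v⁻¹ = Tinv (s i) * Tinv (v''⁻¹) := by
      rw [show v⁻¹ = (s i * v'')⁻¹ by rw [hsv]]
      exact Tinv_decomp cs Tb hmul hquad Tinv hTinv i hasc
    rcases cs.length_mul_simple u i with hup | hdn
    · -- ascent for u
      have key : Tb u * Tinv v⁻¹
          = (T (-2) : LaurentPolynomial ℤ) • (Tb (u * s i) * Tinv (v''⁻¹))
            + ((T (-2) : LaurentPolynomial ℤ) - 1) • (Tb u * Tinv (v''⁻¹)) := by
        rw [hdec, ← mul_assoc, Tb_mul_Tinv_simple_ascent cs Tb hmul hquad Tinv hTinv i hup]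
        rw [add_mul, smul_mul_assoc, smul_mul_assoc]
      have hco : Tb.repr (Tb u * Tinv v⁻¹) x
          = T (-2) * Tb.repr (Tb (u * s i) * Tinv (v''⁻¹)) x
            + (T (-2) - 1) * Tb.repr (Tb u * Tinv (v''⁻¹)) x := by
        rw [key, map_add, map_smul, map_smul]
        simp [Finsupp.add_apply, Finsupp.smul_apply, smul_eq_mul]
      by_cases h1 : Tb.repr (Tb (u * s i) * Tinv (v''⁻¹)) x = 0
      · have h2 : Tb.repr (Tb u * Tinv (v''⁻¹)) x ≠ 0 := by
          intro h2
          rw [hco, h1, h2] at hne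
          simp at hne
        have hb := ih u v'' x hlenv'' h2
        have hstep := below_step cs hup hasc
        rw [hsv] at hstep
        exact below_trans cs hb hstep
      · have hb := ih (u * s i) v'' x hlenv'' h1
        rw [mul_assoc, hsv] at hb
        exact hb
    · -- descent for u
      have key : Tb u * Tinv v⁻¹ = Tb (u * s i) * Tinv (v''⁻¹) := by
        rw [hdec, ← mul_assoc, Tb_mul_Tinv_simple_descent cs Tb hmul hquad Tinv hTinv i hdn]
      rw [key] at hne
      have hb := ih (u * s i) v'' x hlenv'' hne
      rw [mul_assoc, hsv] at hb
      exact hb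

end Hecke

end HeckeAux

/-- In the generic Iwahori–Hecke algebra of a Coxeter system `(W,S)`
(an algebra over `ℤ[q^{1/2}, q^{-1/2}]`, here `LaurentPolynomial ℤ` with variable `T 1 = q^{1/2}`,
so `q = T 2`), with standard basis `T_w` satisfying `T_u T_v = T_{uv}` when lengths add and the
quadratic relation `(T_s - q)(T_s + 1) = 0`, write
`T̃_u T̃_{v⁻¹}⁻¹ = Σ_x R^u_{x,v} T̃_x` where `T̃_w = q^{-ℓ(w)/2} T_w`.
If `R^u_{x,v} ≠ 0` then `x ≤ uv` in the Bruhat order. -/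
theorem wakimoto_coeff_ne_zero_imp_bruhat_le
    (cs : CoxeterSystem M W)
    {H : Type*} [Ring H] [Algebra (LaurentPolynomial ℤ) H]
    (Tb : Module.Basis W (LaurentPolynomial ℤ) H)
    (hmul : ∀ a b : W, cs.length (a * b) = cs.length a + cs.length b →
      Tb a * Tb b = Tb (a * b))
    (hquad : ∀ i : B, (Tb (cs.simple i) - algebraMap (LaurentPolynomial ℤ) H (T 2)) *
      (Tb (cs.simple i) + 1) = 0)
    (Tinv : W → H)
    (hTinv : ∀ w : W, Tb w * Tinv w = 1 ∧ Tinv w * Tb w = 1)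
    (u v x : W)
    -- `R^u_{x,v}`: the coefficient of `T̃_x = T (-ℓ(x)) • T_x` in the expansion of
    -- `T̃_u T̃_{v⁻¹}⁻¹ = (T (-ℓ(u)) • T_u) * (T (ℓ(v)) • (T_{v⁻¹})⁻¹)`.
    (Rcoef : LaurentPolynomial ℤ)
    (hR : Rcoef = T (cs.length x : ℤ) *
      Tb.repr (((T (-(cs.length u : ℤ)) : LaurentPolynomial ℤ) • Tb u) * ((T (cs.length v : ℤ) : LaurentPolynomial ℤ) • Tinv v⁻¹)) x) :
    Rcoef ≠ 0 → bruhatLE cs x (u * v) := by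
  intro hne
  have hrepr : Tb.repr (Tb u * Tinv v⁻¹) x ≠ 0 := by
    intro h0
    apply hne
    rw [hR]
    have hsm : ((T (-(cs.length u : ℤ)) : LaurentPolynomial ℤ) • Tb u) *
        ((T (cs.length v : ℤ) : LaurentPolynomial ℤ) • Tinv v⁻¹)
        = ((T (-(cs.length u : ℤ)) * T (cs.length v : ℤ) : LaurentPolynomial ℤ)) •
          (Tb u * Tinv v⁻¹) := by
      rw [smul_mul_assoc, mul_smul_comm, smul_smul]
    rw [hsm, map_smul, Finsupp.smul_apply, h0, smul_zero, mul_zero]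
  exact HeckeAux.bruhatLE_of_below cs
    (HeckeAux.hecke_main cs Tb hmul hquad Tinv hTinv (cs.length v) u v x rfl hrepr)
end
end

section
/- Let (W,S) be a Coxeter system and let t ∈ W be a reflection (i.e., a conjugate of an element of S). Let u, v ∈ W and suppose u < ut in the Bruhat order. Then uv < utv in the Bruhat order if and only if v < tv in the Bruhat order. -/
variable {B W : Type*} [Group W] {M : CoxeterMatrix B}

/-- The strict Bruhat order. -/
def bruhatLT (cs : CoxeterSystem M W) (x w : W) : Prop :=
  bruhatLE cs x w ∧ x ≠ w

namespace BruhatAux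

open CoxeterSystem List

-- pure group lemmas
theorem pow_shift (x y : W) (b : ℕ) : x * (y * x) ^ b = (x * y) ^ b * x := by
  induction b with
  | zero => simp
  | succ b ih =>
    rw [pow_succ', pow_succ', ← mul_assoc x (y*x), show x * (y*x) = (x*y)*x by group,
      mul_assoc, ih]
    group

theorem key_comm (x y : W) (hx : x * x = 1) (hy : y * y = 1) (b : ℕ)
    (h : (x * y) ^ (2 * b) = 1) : y * (x * y) ^ b = (x * y) ^ b * y := by
  have h1 : y * (x * y) ^ b = (y * x) ^ b * y := pow_shift y x b
  have h2 : (y * x) ^ b = ((x * y) ^ b)⁻¹ := by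
    rw [← inv_pow]
    congr 1
    rw [mul_inv_rev]
    rw [show x⁻¹ = x from inv_eq_of_mul_eq_one_right hx,
        show y⁻¹ = y from inv_eq_of_mul_eq_one_right hy]
  have h3 : ((x * y) ^ b)⁻¹ = (x * y) ^ b := by
    apply inv_eq_of_mul_eq_one_right
    rw [← pow_add]
    rwa [two_mul] at h
  rw [h1, h2, h3]

theorem key_odd (x y : W) (hx : x * x = 1) (hy : y * y = 1) (b : ℕ)
    (h : (x * y) ^ (2 * b + 1) = 1) : y * (x * y) ^ b = (x * y) ^ (b + 1) * y := by
  have h1 : y * (x * y) ^ b = (y * x) ^ b * y := pow_shift y x b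
  have h2 : (y * x) ^ b = ((x * y) ^ b)⁻¹ := by
    rw [← inv_pow]
    congr 1
    rw [mul_inv_rev]
    rw [show x⁻¹ = x from inv_eq_of_mul_eq_one_right hx,
        show y⁻¹ = y from inv_eq_of_mul_eq_one_right hy]
  have h3 : ((x * y) ^ b)⁻¹ = (x * y) ^ (b + 1) := by
    apply inv_eq_of_mul_eq_one_left
    rw [← pow_add]
    rwa [show b + 1 + b = 2 * b + 1 by omega]
  rw [h1, h2, h3]

/-- closed form for alternating products -/
def Aseq (x y : W) (k : ℕ) : W := (if Even k then 1 else y) * (x * y) ^ (k / 2)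

theorem Aseq_even (x y : W) (a : ℕ) : Aseq x y (2 * a) = (x * y) ^ a := by
  simp [Aseq, Nat.mul_div_cancel_left a (by norm_num : 0 < 2)]

theorem Aseq_odd (x y : W) (a : ℕ) : Aseq x y (2 * a + 1) = y * (x * y) ^ a := by
  have : ¬ Even (2 * a + 1) := by simp [Nat.even_add_one, parity_simps]
  simp [Aseq, this, Nat.mul_add_div (by norm_num : 0 < 2)]

theorem Aseq_shift (x y : W) (hx : x * x = 1) (hy : y * y = 1) (m : ℕ)
    (hm : (x * y) ^ m = 1) (k : ℕ) : Aseq x y (k + m) = Aseq x y m * Aseq x y k := by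
  rcases Nat.even_or_odd' m with ⟨b, hb | hb⟩ <;> rcases Nat.even_or_odd' k with ⟨a, ha | ha⟩ <;>
      subst hb <;> subst ha
  · rw [show 2 * a + 2 * b = 2 * (a + b) by ring, Aseq_even, Aseq_even, Aseq_even, pow_add]
    exact (pow_mul_comm _ _ _).symm
  · rw [show 2 * a + 1 + 2 * b = 2 * (b + a) + 1 by ring, Aseq_odd, Aseq_even, Aseq_odd,
      pow_add, ← mul_assoc, ← mul_assoc, key_comm x y hx hy b hm]
  · rw [show 2 * a + (2 * b + 1) = 2 * (b + a) + 1 by ring, Aseq_odd, Aseq_odd, Aseq_even,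
      pow_add, mul_assoc]
  · rw [show 2 * a + 1 + (2 * b + 1) = 2 * (b + a + 1) by ring, Aseq_even, Aseq_odd, Aseq_odd,
      show b + a + 1 = (b + 1) + a by ring, pow_add,
      key_odd x y hx hy b hm, mul_assoc, ← mul_assoc y y, hy, one_mul]


section
variable (cs : CoxeterSystem M W)

local prefix:100 "σ" => cs.simple
local prefix:100 "ℼ" => cs.wordProd
local prefix:100 "ℓ" => cs.length

theorem wordProd_alternatingWord_eq_Aseq (i i' : B) (k : ℕ) :
    ℼ (alternatingWord i i' k) = Aseq (σ i) (σ i') k := by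
  rw [cs.prod_alternatingWord_eq_mul_pow, Aseq]

theorem drop_alternatingWord (i i' : B) (n q : ℕ) :
    (alternatingWord i i' n).drop q = alternatingWord i i' (n - q) := by
  induction q generalizing n with
  | zero => simp
  | succ q ih =>
    match n with
    | 0 => simp [alternatingWord]
    | (k+1) =>
      rw [alternatingWord_succ' i i' k, List.drop_succ_cons, ih,
        show k + 1 - (q + 1) = k - q by omega]

theorem ris_alternatingWord_getD (i i' : B) (n j : ℕ) (hj : j < n) :
    (cs.rightInvSeq (alternatingWord i i' n)).getD j 1 =
      (ℼ (alternatingWord i i' (n - 1 - j)))⁻¹ * ℼ (alternatingWord i i' (n - j)) := by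
  rw [cs.getD_rightInvSeq, drop_alternatingWord,
    show n - (j+1) = n - 1 - j by omega]
  have hlet : (alternatingWord i i' n)[j]? =
      some (if Even (n - 1 - j) then i' else i) := by
    rw [← List.head?_drop, drop_alternatingWord,
      show n - j = (n - 1 - j) + 1 by omega, alternatingWord_succ']
    rfl
  rw [hlet]
  have : ℼ (alternatingWord i i' (n - j)) =
      σ (if Even (n - 1 - j) then i' else i) * ℼ (alternatingWord i i' (n - 1 - j)) := by
    rw [show n - j = (n - 1 - j) + 1 by omega, alternatingWord_succ', cs.wordProd_cons]
  rw [this]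
  simp [mul_assoc]

theorem ris_alternatingWord_pair (i i' : B) (m : ℕ) (hm : (σ i * σ i') ^ m = 1)
    (j : ℕ) (hj : j < m) :
    (cs.rightInvSeq (alternatingWord i i' (2 * m))).getD (j + m) 1 =
      (cs.rightInvSeq (alternatingWord i i' (2 * m))).getD j 1 := by
  rw [ris_alternatingWord_getD cs i i' (2*m) (j+m) (by omega),
    ris_alternatingWord_getD cs i i' (2*m) j (by omega)]
  rw [show 2*m - 1 - (j+m) = m - 1 - j by omega, show 2*m - (j+m) = (m-1-j)+1 by omega,
    show 2*m - 1 - j = (m-1-j) + m by omega, show 2*m - j = ((m-1-j)+1) + m by omega]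
  rw [wordProd_alternatingWord_eq_Aseq, wordProd_alternatingWord_eq_Aseq,
    wordProd_alternatingWord_eq_Aseq, wordProd_alternatingWord_eq_Aseq]
  rw [Aseq_shift _ _ (cs.simple_mul_simple_self i) (cs.simple_mul_simple_self i') m hm,
    Aseq_shift _ _ (cs.simple_mul_simple_self i) (cs.simple_mul_simple_self i') m hm]
  group

theorem ris_alternatingWord_even_count [DecidableEq W] (i i' : B) (m : ℕ)
    (hm : (σ i * σ i') ^ m = 1) (t : W) :
    Even ((cs.rightInvSeq (alternatingWord i i' (2 * m))).count t) := by
  set l := cs.rightInvSeq (alternatingWord i i' (2 * m)) with hl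
  have hlen : l.length = 2 * m := by
    rw [hl, cs.length_rightInvSeq, length_alternatingWord]
  have hsplit : l = l.take m ++ l.take m := by
    apply List.ext_getElem
    · simp [hlen]; omega
    · intro j h1 h2
      have hjlen : j < 2 * m := by rwa [hlen] at h1
      have htl : (l.take m).length = m := by rw [List.length_take, hlen]; omega
      by_cases hj : j < m
      · rw [List.getElem_append_left (by omega)]
        rw [List.getElem_take]
        all_goals omega
      · rw [List.getElem_append_right (by omega)]
        rw [List.getElem_take]
        have := ris_alternatingWord_pair cs i i' m hm (j - m) (by omega)
        rw [show j - m + m = j by omega] at this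
        rw [← List.getD_eq_getElem l 1, ← List.getD_eq_getElem l 1, htl]
        exact this
  rw [hsplit, List.count_append]
  exact ⟨_, rfl⟩


open scoped Classical in
/-- The underlying involution of the reflection representation on `W × ℤˣ`. -/
noncomputable def refl1 (i : B) : W × ℤˣ → W × ℤˣ :=
  fun p => (σ i * p.1 * σ i, if p.1 = σ i then -p.2 else p.2)

theorem refl1_involutive (i : B) : Function.Involutive (refl1 cs i) := by
  rintro ⟨w, e⟩
  classical
  simp only [refl1]
  have hss := cs.simple_mul_simple_self i
  have h1 : σ i * (σ i * w * σ i) * σ i = w := by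
    calc σ i * (σ i * w * σ i) * σ i = (σ i * σ i) * w * (σ i * σ i) := by group
    _ = w := by rw [hss]; group
  have h2 : (σ i * w * σ i = σ i) ↔ (w = σ i) := by
    constructor
    · intro h
      have h3 : σ i * (σ i * w * σ i) * σ i = σ i * σ i * σ i := by rw [h]
      rw [h1] at h3
      rw [h3, hss, one_mul]
    · intro h
      rw [h, hss, one_mul]
  by_cases hp : w = σ i
  · simp [hp, h2, hss, h1, if_pos]
  · simp [hp, h2, h1]

/-- The reflection representation permutation attached to a simple generator. -/
noncomputable def reflPerm (i : B) : Equiv.Perm (W × ℤˣ) :=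
  (refl1_involutive cs i).toPerm

theorem reflPerm_apply (i : B) (p : W × ℤˣ) : reflPerm cs i p = refl1 cs i p := rfl

open scoped Classical in
theorem prod_reflPerm_apply (ω : List B) (p : W × ℤˣ) :
    (ω.map (reflPerm cs)).prod p =
      (ℼ ω * p.1 * (ℼ ω)⁻¹, (-1 : ℤˣ) ^ ((cs.rightInvSeq ω).count p.1) * p.2) := by
  induction ω generalizing p with
  | nil => simp [cs.wordProd_nil]
  | cons i α ih =>
    rw [List.map_cons, List.prod_cons, Equiv.Perm.mul_apply, ih, reflPerm_apply]
    simp only [refl1]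
    have hcond : (ℼ α * p.1 * (ℼ α)⁻¹ = σ i) ↔ (p.1 = (ℼ α)⁻¹ * σ i * ℼ α) := by
      constructor
      · intro h; rw [← h]; group
      · intro h; rw [h]; group
    have hfst : σ i * (ℼ α * p.1 * (ℼ α)⁻¹) * σ i = ℼ (i :: α) * p.1 * (ℼ (i :: α))⁻¹ := by
      rw [cs.wordProd_cons, mul_inv_rev, cs.inv_simple]
      group
    have hcount : (cs.rightInvSeq (i :: α)).count p.1 =
        (cs.rightInvSeq α).count p.1 + (if p.1 = (ℼ α)⁻¹ * σ i * ℼ α then 1 else 0) := by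
      show (((ℼ α)⁻¹ * σ i * ℼ α) :: cs.rightInvSeq α).count p.1 = _
      simp only [List.count_cons, beq_iff_eq]
      rcases eq_or_ne p.1 ((ℼ α)⁻¹ * σ i * ℼ α) with hp | hp
      · simp [hp]
      · simp [hp, hp.symm]
    rw [Prod.ext_iff]
    constructor
    · simpa using hfst
    · simp only
      by_cases hp : p.1 = (ℼ α)⁻¹ * σ i * ℼ α
      · rw [if_pos (hcond.mpr hp), hcount, if_pos hp]
        simp [pow_succ, mul_assoc, mul_comm, mul_left_comm]
      · rw [if_neg (fun h => hp (hcond.mp h)), hcount, if_neg hp, Nat.add_zero]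

theorem prod_reflPerm_alternatingWord (i i' : B) (m : ℕ) :
    ((alternatingWord i i' (2 * m)).map (reflPerm cs)).prod =
      (reflPerm cs i * reflPerm cs i') ^ m := by
  induction m with
  | zero =>
    rw [Nat.mul_zero]
    show (List.map (reflPerm cs) []).prod = _
    simp
  | succ m ih =>
    have : alternatingWord i i' (2 * (m + 1)) = i :: i' :: alternatingWord i i' (2 * m) := by
      rw [show 2 * (m+1) = (2*m+1)+1 by ring, alternatingWord_succ' i i' (2*m+1),
        alternatingWord_succ' i i' (2*m)]
      simp [Nat.even_add_one, parity_simps]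
    rw [this, List.map_cons, List.map_cons, List.prod_cons, List.prod_cons, ih,
      pow_succ']
    rw [mul_assoc]

theorem isLiftable_reflPerm : M.IsLiftable (reflPerm cs) := by
  intro i i'
  classical
  rw [← prod_reflPerm_alternatingWord]
  apply Equiv.ext
  intro p
  rw [prod_reflPerm_apply]
  have hπ : ℼ (alternatingWord i i' (2 * M i i')) = 1 := by
    rw [cs.prod_alternatingWord_eq_mul_pow]
    simp [Nat.mul_div_cancel_left, cs.simple_mul_simple_pow]
  have hcount := ris_alternatingWord_even_count cs i i' (M i i')
    (cs.simple_mul_simple_pow i i') p.1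
  obtain ⟨c, hc⟩ := hcount
  rw [hπ, hc, show c + c = 2 * c by ring, pow_mul]
  simp

/-- The reflection representation of the Coxeter group. -/
noncomputable def rrep : W →* Equiv.Perm (W × ℤˣ) :=
  cs.lift ⟨reflPerm cs, isLiftable_reflPerm cs⟩

theorem rrep_simple (i : B) : rrep cs (σ i) = reflPerm cs i := by
  apply cs.lift_apply_simple

theorem rrep_wordProd (ω : List B) : rrep cs (ℼ ω) = (ω.map (reflPerm cs)).prod := by
  induction ω with
  | nil => simp [cs.wordProd_nil]
  | cons i α ih => rw [cs.wordProd_cons, map_mul, ih, rrep_simple, List.map_cons,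
      List.prod_cons]

/-- The sign of `t` under the action of `w` in the reflection representation. -/
noncomputable def sgn (w t : W) : ℤˣ := (rrep cs w (t, 1)).2


open scoped Classical in
theorem sgn_spec {ω : List B} (t : W) :
    sgn cs (ℼ ω) t = (-1 : ℤˣ) ^ ((cs.rightInvSeq ω).count t) := by
  rw [sgn, rrep_wordProd, prod_reflPerm_apply]
  simp

theorem rrep_apply (w : W) (p : W × ℤˣ) :
    rrep cs w p = (w * p.1 * w⁻¹, sgn cs w p.1 * p.2) := by
  classical
  obtain ⟨ω, hred, hw⟩ := cs.exists_reduced_word' w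
  rw [hw, rrep_wordProd, prod_reflPerm_apply, sgn_spec]
  

theorem sgn_mul (u v t : W) : sgn cs (u * v) t = sgn cs u (v * t * v⁻¹) * sgn cs v t := by
  have h1 : rrep cs (u * v) (t, 1) = rrep cs u (rrep cs v (t, 1)) := by
    rw [map_mul]; rfl
  rw [sgn, h1, rrep_apply cs v (t, 1), rrep_apply cs u]
  simp [sgn]

theorem sgn_one_left (t : W) : sgn cs 1 t = 1 := by
  rw [sgn, map_one]; rfl

theorem sgn_simple_self (i : B) : sgn cs (σ i) (σ i) = -1 := by
  classical
  rw [sgn, rrep_simple, reflPerm_apply]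
  simp [refl1]

theorem sgn_inv_cancel (u t : W) : sgn cs u (u⁻¹ * t * u) * sgn cs u⁻¹ t = 1 := by
  have h := sgn_mul cs u u⁻¹ t
  rw [mul_inv_cancel, sgn_one_left, inv_inv] at h
  exact h.symm

theorem sgn_reflection_self {t : W} (ht : cs.IsReflection t) : sgn cs t t = -1 := by
  obtain ⟨u, j, rfl⟩ := ht
  have hss := cs.simple_mul_simple_self j
  have hX : (σ j * u⁻¹) * (u * σ j * u⁻¹) * (σ j * u⁻¹)⁻¹ = σ j := by group
  have hY : u⁻¹ * (u * σ j * u⁻¹) * (u⁻¹)⁻¹ = σ j := by group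
  have h1 : sgn cs (u * (σ j * u⁻¹)) (u * σ j * u⁻¹)
      = sgn cs u (σ j) * sgn cs (σ j * u⁻¹) (u * σ j * u⁻¹) := by
    rw [sgn_mul, hX]
  have h2 : sgn cs (σ j * u⁻¹) (u * σ j * u⁻¹)
      = sgn cs (σ j) (σ j) * sgn cs u⁻¹ (u * σ j * u⁻¹) := by
    rw [sgn_mul, hY]
  have h3 : sgn cs u (u⁻¹ * (u * σ j * u⁻¹) * u) * sgn cs u⁻¹ (u * σ j * u⁻¹) = 1 :=
    sgn_inv_cancel cs u (u * σ j * u⁻¹)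
  have hZ : u⁻¹ * (u * σ j * u⁻¹) * u = σ j := by group
  rw [hZ] at h3
  have hfinal : sgn cs (u * (σ j * u⁻¹)) (u * σ j * u⁻¹) = -1 := by
    rw [h1, h2, sgn_simple_self]
    calc sgn cs u (σ j) * (-1 * sgn cs u⁻¹ (u * σ j * u⁻¹))
        = -(sgn cs u (σ j) * sgn cs u⁻¹ (u * σ j * u⁻¹)) := by
          rw [neg_one_mul, mul_neg]
      _ = -1 := by rw [h3]
  rw [← hfinal]
  congr 1
  group

theorem sgn_eq_neg_one_iff_mem {ω : List B} (hred : cs.IsReduced ω) (t : W) :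
    sgn cs (ℼ ω) t = -1 ↔ t ∈ cs.rightInvSeq ω := by
  classical
  rw [sgn_spec]
  have hnd := hred.nodup_rightInvSeq
  have hle : (cs.rightInvSeq ω).count t ≤ 1 := List.nodup_iff_count_le_one.mp hnd t
  constructor
  · intro h
    by_contra hmem
    rw [List.count_eq_zero_of_not_mem hmem, pow_zero] at h
    exact absurd h (by decide)
  · intro h
    have hpos : 0 < (cs.rightInvSeq ω).count t := List.count_pos_iff.mpr h
    have : (cs.rightInvSeq ω).count t = 1 := by omega
    rw [this, pow_one]

theorem length_lt_of_sgn_neg {t : W} (w : W) (h : sgn cs w t = -1) :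
    ℓ (w * t) < ℓ w := by
  obtain ⟨ω, hred, hw⟩ := cs.exists_reduced_word' w
  rw [hw] at h ⊢
  exact (cs.isRightInversion_of_mem_rightInvSeq hred
    ((sgn_eq_neg_one_iff_mem cs hred t).mp h)).2

theorem sgn_eq_neg_one_iff {t : W} (ht : cs.IsReflection t) (w : W) :
    sgn cs w t = -1 ↔ ℓ (w * t) < ℓ w := by
  constructor
  · exact length_lt_of_sgn_neg cs w
  · intro h
    by_contra hne
    have h1 : sgn cs w t = 1 := (Int.units_eq_one_or _).resolve_right hne
    have h2 : sgn cs ((w * t) * t) t = sgn cs (w * t) (t * t * t⁻¹) * sgn cs t t :=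
      sgn_mul cs (w * t) t t
    rw [show (w * t) * t = w by rw [mul_assoc, ht.mul_self, mul_one],
      show t * t * t⁻¹ = t by rw [ht.mul_self, one_mul, ht.inv],
      sgn_reflection_self cs ht, h1] at h2
    have h3 : sgn cs (w * t) t = -1 := by
      rcases Int.units_eq_one_or (sgn cs (w * t) t) with h' | h'
      · rw [h'] at h2; exact absurd h2.symm (by decide)
      · exact h'
    have h4 := length_lt_of_sgn_neg cs (w * t) h3
    rw [mul_assoc, ht.mul_self, mul_one] at h4
    omega

theorem sgn_eq_one_iff {t : W} (ht : cs.IsReflection t) (w : W) :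
    sgn cs w t = 1 ↔ ℓ w < ℓ (w * t) := by
  have hne := ht.length_mul_left_ne w
  constructor
  · intro h
    have : ¬ ℓ (w * t) < ℓ w := fun hc => by
      have h2 := (sgn_eq_neg_one_iff cs ht w).mpr hc
      rw [h] at h2
      exact absurd h2 (by decide)
    omega
  · intro h
    rcases Int.units_eq_one_or (sgn cs w t) with h' | h'
    · exact h'
    · have := (sgn_eq_neg_one_iff cs ht w).mp h'
      omega


theorem right_exchange' {t : W} (ht : cs.IsReflection t) {ω : List B}
    (hred : cs.IsReduced ω) (h : ℓ (ℼ ω * t) < ℓ (ℼ ω)) : t ∈ cs.rightInvSeq ω :=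
  (sgn_eq_neg_one_iff_mem cs hred t).mp ((sgn_eq_neg_one_iff cs ht (ℼ ω)).mpr h)

theorem left_exchange' {t : W} (ht : cs.IsReflection t) {ω : List B}
    (hred : cs.IsReduced ω) (h : ℓ (t * ℼ ω) < ℓ (ℼ ω)) : t ∈ cs.leftInvSeq ω := by
  have h2 : ℓ (ℼ ω.reverse * t) < ℓ (ℼ ω.reverse) := by
    rw [cs.wordProd_reverse]
    have e1 : (ℼ ω)⁻¹ * t = (t * ℼ ω)⁻¹ := by rw [mul_inv_rev, ht.inv]
    rw [e1, cs.length_inv, cs.length_inv]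
    exact h
  have hredr : cs.IsReduced ω.reverse := (cs.isReduced_reverse_iff ω).mpr hred
  have hmem : t ∈ cs.rightInvSeq ω.reverse := right_exchange' cs ht hredr h2
  have e2 : cs.rightInvSeq ω.reverse = (cs.leftInvSeq ω).reverse := by
    have := cs.leftInvSeq_reverse ω.reverse
    rw [List.reverse_reverse] at this
    rw [this, List.reverse_reverse]
  rw [e2, List.mem_reverse] at hmem
  exact hmem

theorem exists_reduced_sublist (ω : List B) :
    ∃ β : List B, β.Sublist ω ∧ cs.IsReduced β ∧ ℼ β = ℼ ω := by
  induction ω with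
  | nil => exact ⟨[], List.Sublist.refl _, by simp [CoxeterSystem.IsReduced], rfl⟩
  | cons i α ih =>
    obtain ⟨β, hsub, hred, hprod⟩ := ih
    by_cases h : cs.IsReduced (i :: β)
    · exact ⟨i :: β, hsub.cons_cons i, h, by rw [cs.wordProd_cons, cs.wordProd_cons, hprod]⟩
    · have hlb : ℓ (ℼ β) = β.length := hred
      have hne : ℓ (σ i * ℼ β) ≠ β.length + 1 := by
        intro hc
        apply h
        show ℓ (ℼ (i :: β)) = (i :: β).length
        rw [cs.wordProd_cons, hc, List.length_cons]
      have hne2 : ℓ (σ i * ℼ β) ≠ ℓ (ℼ β) := cs.length_simple_mul_ne (ℼ β) i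
      have hval : ℓ (σ i * ℼ β) = β.length - 1 := by
        rcases cs.length_simple_mul (ℼ β) i with hc | hc
        · omega
        · omega
      have hpos : 1 ≤ β.length := by
        by_contra hc
        have hb0 : β.length = 0 := by omega
        rw [hb0] at hval
        omega
      have hlt : ℓ (σ i * ℼ β) < ℓ (ℼ β) := by omega
      have hmem := left_exchange' cs (cs.isReflection_simple i) hred hlt
      obtain ⟨j, hj, hget⟩ := List.mem_iff_getElem.mp hmem
      have hj' : j < β.length := by
        rwa [cs.length_leftInvSeq] at hj
      have hprod2 : ℼ (β.eraseIdx j) = σ i * ℼ β := by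
        rw [← cs.getD_leftInvSeq_mul_wordProd, List.getD_eq_getElem _ 1 hj, hget]
      have hredE : cs.IsReduced (β.eraseIdx j) := by
        show ℓ (ℼ (β.eraseIdx j)) = (β.eraseIdx j).length
        rw [hprod2, List.length_eraseIdx_of_lt hj']
        exact hval
      refine ⟨β.eraseIdx j, ?_, hredE, ?_⟩
      · exact ((β.eraseIdx_sublist j).trans hsub).trans (List.sublist_cons_self i α)
      · rw [hprod2, cs.wordProd_cons, hprod]

theorem bruhatLT_mul_reflection_iff {t : W} (ht : cs.IsReflection t) (x : W) :
    bruhatLT cs x (x * t) ↔ ℓ x < ℓ (x * t) := by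
  constructor
  · rintro ⟨⟨ω, hred, hπ, ω', hsub, hred', hπ'⟩, hne⟩
    have h1 : ℓ x ≤ ℓ (x * t) := by
      have e1 : ℓ x = ω'.length := by rw [← hπ']; exact hred'
      have e2 : ℓ (x * t) = ω.length := by rw [← hπ]; exact hred
      rw [e1, e2]
      exact hsub.length_le
    exact lt_of_le_of_ne h1 (Ne.symm (ht.length_mul_left_ne x))
  · intro hlt
    constructor
    · obtain ⟨ω, hred, hw⟩ := cs.exists_reduced_word' (x * t)
      have hinv : ℓ (ℼ ω * t) < ℓ (ℼ ω) := by
        rw [← hw, mul_assoc, ht.mul_self, mul_one]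
        exact hlt
      have hmem := right_exchange' cs ht hred hinv
      obtain ⟨j, hj, hget⟩ := List.mem_iff_getElem.mp hmem
      have hx : ℼ (ω.eraseIdx j) = x := by
        rw [← cs.wordProd_mul_getD_rightInvSeq, List.getD_eq_getElem _ 1 hj, hget, ← hw,
          mul_assoc, ht.mul_self, mul_one]
      obtain ⟨β, hsubβ, hredβ, hπβ⟩ := exists_reduced_sublist cs (ω.eraseIdx j)
      exact ⟨ω, hred, hw.symm, β, hsubβ.trans (ω.eraseIdx_sublist j), hredβ,
        by rw [hπβ, hx]⟩
    · intro heq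
      rw [← heq] at hlt
      exact lt_irrefl _ hlt

end

end BruhatAux


/-- if `t` is a reflection and `u < ut` in the Bruhat order, then
`uv < utv` if and only if `v < tv`. -/
theorem bruhatLT_mul_iff_of_bruhatLT_mul_reflection
    (cs : CoxeterSystem M W) {t : W} (ht : cs.IsReflection t) (u v : W)
    (h : bruhatLT cs u (u * t)) :
    bruhatLT cs (u * v) (u * t * v) ↔ bruhatLT cs v (t * v) := by
  have hu : cs.length u < cs.length (u * t) :=
    (BruhatAux.bruhatLT_mul_reflection_iff cs ht u).mp h
  have ht1 : cs.IsReflection (v⁻¹ * t * v) := by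
    have h' := ht.conj v⁻¹
    rwa [inv_inv] at h'
  have h1 : u * t * v = (u * v) * (v⁻¹ * t * v) := by group
  have h2 : t * v = v * (v⁻¹ * t * v) := by group
  rw [h1, h2, BruhatAux.bruhatLT_mul_reflection_iff cs ht1,
    BruhatAux.bruhatLT_mul_reflection_iff cs ht1,
    ← BruhatAux.sgn_eq_one_iff cs ht1, ← BruhatAux.sgn_eq_one_iff cs ht1]
  have hc : BruhatAux.sgn cs (u * v) (v⁻¹ * t * v)
      = BruhatAux.sgn cs u t * BruhatAux.sgn cs v (v⁻¹ * t * v) := by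
    rw [BruhatAux.sgn_mul, show v * (v⁻¹ * t * v) * v⁻¹ = t by group]
  have hu1 : BruhatAux.sgn cs u t = 1 := (BruhatAux.sgn_eq_one_iff cs ht u).mpr hu
  rw [hc, hu1, one_mul]
end
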